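/- Let A_0 = η I_d with η > 0 and A_t = A_{t-1} + x_t x_tᵀ for vectors x_t ∈ ℝ^d with ‖x_t‖ ≤ S. Then Σ_{t=1}^{T} min(1, ‖x_t‖²_{A_{t-1}⁻¹}) ≤ 2 ln(det(A_T)/det(A_0)) ≤ 2d ln(1 + T S²/(η d)). -/

import Mathlib

open Matrix Finset

-- aux 1: min(1,u) ≤ 2 log(1+u) for u ≥ 0
lemma aux_min_le_log {u : ℝ} (hu : 0 ≤ u) : min 1 u ≤ 2 * Real.log (1 + u) := by
  have h1 : (0:ℝ) < 1 + u := by linarith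
  have hlog : u / (1 + u) ≤ Real.log (1 + u) := by
    have := Real.log_le_sub_one_of_pos (x := (1+u)⁻¹) (by positivity)
    rw [Real.log_inv] at this
    have : -( (1+u)⁻¹ - 1) ≤ Real.log (1+u) := by linarith
    calc u / (1+u) = -((1+u)⁻¹ - 1) := by field_simp; ring
    _ ≤ _ := this
  have hmin : min 1 u ≤ 2 * (u / (1 + u)) := by
    rcases le_total u 1 with h | h
    · rw [min_eq_right h]
      rw [div_le_iff₀ h1] at *
      nlinarith [div_nonneg hu h1.le, mul_div_cancel₀ u h1.ne']
    · rw [min_eq_left h, ← mul_div_assoc, le_div_iff₀ h1]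
      nlinarith
  linarith

-- aux 2: trace = sum of eigenvalues (real case)
lemma aux_trace_eq {n : Type*} [Fintype n] [DecidableEq n] {A : Matrix n n ℝ}
    (hA : A.IsHermitian) : A.trace = ∑ i, hA.eigenvalues i := by
  simpa using hA.trace_eq_sum_eigenvalues

-- aux 3: vecMulVec x x is PSD over ℝ
lemma aux_psd {n : Type*} [Fintype n] (v : n → ℝ) : (Matrix.vecMulVec v v).PosSemidef := by
  rw [Matrix.vecMulVec_eq Unit]
  have := Matrix.posSemidef_self_mul_conjTranspose (Matrix.replicateCol Unit v)
  rwa [Matrix.conjTranspose_replicateCol, star_trivial] at this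

-- aux 4: determinant of rank-one update
lemma aux_det {n : Type*} [Fintype n] [DecidableEq n] {A : Matrix n n ℝ} (hA : A.PosDef)
    (v : n → ℝ) :
    (A + Matrix.vecMulVec v v).det = A.det * (1 + v ⬝ᵥ A⁻¹.mulVec v) := by
  have hinv : A * A⁻¹ = 1 := Matrix.mul_nonsing_inv A hA.det_pos.ne'.isUnit
  have : A + Matrix.vecMulVec v v = A * (1 + Matrix.replicateCol Unit (A⁻¹.mulVec v) * Matrix.replicateRow Unit v) := by
    rw [Matrix.mul_add, Matrix.mul_one, ← Matrix.mul_assoc, ← Matrix.replicateCol_mulVec,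
      Matrix.mulVec_mulVec, hinv, Matrix.one_mulVec, Matrix.vecMulVec_eq Unit]
  rw [this, Matrix.det_mul, Matrix.det_one_add_replicateCol_mul_replicateRow]

-- aux 5 : AM-GM for products
lemma aux_amgm {n : Type*} [Fintype n] [Nonempty n] (z : n → ℝ) (hz : ∀ i, 0 ≤ z i) :
    ∏ i, z i ≤ ((∑ i, z i) / Fintype.card n) ^ (Fintype.card n) := by
  set d := Fintype.card n with hd
  have hd0 : 0 < d := Fintype.card_pos
  have h := Real.geom_mean_le_arith_mean_weighted Finset.univ (fun _ => (d:ℝ)⁻¹) z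
    (fun _ _ => by positivity) (by rw [Finset.sum_const, nsmul_eq_mul]; field_simp; simp [hd]) (fun i _ => hz i)
  have hL : (∏ i, z i ^ ((d:ℝ)⁻¹)) ^ (d:ℕ) = ∏ i, z i := by
    rw [← Real.rpow_natCast (∏ i, z i ^ ((d:ℝ)⁻¹)) d, ← Real.finset_prod_rpow _ _ (fun i _ => Real.rpow_nonneg (hz i) _)]
    refine Finset.prod_congr rfl fun i _ => ?_
    rw [← Real.rpow_mul (hz i)]
    rw [inv_mul_cancel₀ (by exact_mod_cast hd0.ne'), Real.rpow_one]
  calc ∏ i, z i = (∏ i, z i ^ ((d:ℝ)⁻¹)) ^ (d:ℕ) := hL.symm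
  _ ≤ ((∑ i, z i) / d) ^ (d:ℕ) := by
      apply pow_le_pow_left₀ (Finset.prod_nonneg fun i _ => Real.rpow_nonneg (hz i) _)
      calc ∏ i, z i ^ ((d:ℝ)⁻¹) ≤ ∑ i, (d:ℝ)⁻¹ * z i := h
      _ = (∑ i, z i) / d := by rw [← Finset.mul_sum]; ring
theorem stmt13 {d : ℕ} (hd : 0 < d) (η S : ℝ) (hη : 0 < η) (T : ℕ)
    (x : ℕ → Fin d → ℝ) (A : ℕ → Matrix (Fin d) (Fin d) ℝ)
    (hA0 : A 0 = η • 1)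
    (hrec : ∀ t, A (t + 1) = A t + Matrix.vecMulVec (x (t + 1)) (x (t + 1)))
    (hx : ∀ t, Real.sqrt (x t ⬝ᵥ x t) ≤ S) :
    (∑ t ∈ Finset.Icc 1 T, min 1 (x t ⬝ᵥ (A (t - 1))⁻¹.mulVec (x t)))
      ≤ 2 * Real.log ((A T).det / (A 0).det) ∧
    2 * Real.log ((A T).det / (A 0).det) ≤
      2 * d * Real.log (1 + T * S ^ 2 / (η * d)) := by
  have hS : 0 ≤ S := le_trans (Real.sqrt_nonneg _) (hx 0)
  have hPD : ∀ t, (A t).PosDef := by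
    intro t
    induction t with
    | zero =>
      rw [hA0, Matrix.smul_one_eq_diagonal]
      exact Matrix.posDef_diagonal_iff.mpr fun _ => hη
    | succ t ih => rw [hrec t]; exact ih.add_posSemidef (aux_psd _)
  set u : ℕ → ℝ := fun t => x t ⬝ᵥ (A (t - 1))⁻¹.mulVec (x t) with hu
  have hu0 : ∀ t, 0 ≤ u t := fun t => by
    have h := ((hPD (t-1)).inv).posSemidef.dotProduct_mulVec_nonneg (x t)
    simpa [hu] using h
  have hdpos : ∀ t, 0 < (A t).det := fun t => (hPD t).det_pos
  have hdet : ∀ t : ℕ, (A (t+1)).det = (A t).det * (1 + u (t+1)) := fun t => by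
    rw [hrec t, aux_det (hPD t)]
    simp [hu]
  have part1 : ∀ N, (∑ t ∈ Finset.Icc 1 N, min 1 (u t)) ≤
      2 * Real.log ((A N).det / (A 0).det) := by
    intro N
    induction N with
    | zero => simp [div_self (hdpos 0).ne']
    | succ N ih =>
      rw [Finset.sum_Icc_succ_top (by omega : 1 ≤ N + 1)]
      have h1u : 0 < 1 + u (N+1) := by linarith [hu0 (N+1)]
      have hq : (A (N+1)).det / (A 0).det = ((A N).det / (A 0).det) * (1 + u (N+1)) := by
        rw [hdet N]; ring
      rw [hq, Real.log_mul (div_pos (hdpos N) (hdpos 0)).ne' h1u.ne']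
      have := aux_min_le_log (hu0 (N+1))
      linarith
  refine ⟨part1 T, ?_⟩
  -- second part
  have hherm := (hPD T).isHermitian
  have hdn : (0:ℝ) < d := by exact_mod_cast hd
  have htr : (A T).trace ≤ η * d + T * S ^ 2 := by
    have hstep : ∀ t : ℕ, (A t).trace ≤ η * d + t * S ^ 2 := by
      intro t
      induction t with
      | zero =>
        rw [hA0, Matrix.trace_smul, Matrix.trace_one]
        simp [Fintype.card_fin]
      | succ t ih =>
        rw [hrec t, Matrix.trace_add]
        have h0 : 0 ≤ x (t+1) ⬝ᵥ x (t+1) :=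
          Finset.sum_nonneg fun i _ => mul_self_nonneg _
        have hxx : x (t+1) ⬝ᵥ x (t+1) ≤ S ^ 2 := by
          nlinarith [Real.sq_sqrt h0, hx (t+1), Real.sqrt_nonneg (x (t+1) ⬝ᵥ x (t+1))]
        have htrv : (Matrix.vecMulVec (x (t+1)) (x (t+1))).trace = x (t+1) ⬝ᵥ x (t+1) := by
          rw [Matrix.vecMulVec_eq Unit, Matrix.trace_replicateCol_mul_replicateRow]
        rw [htrv]
        push_cast
        push_cast at ih
        nlinarith
    exact hstep T
  have hc : (0:ℝ) ≤ T * S ^ 2 / (η * d) := by positivity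
  have hb : (0:ℝ) < 1 + T * S ^ 2 / (η * d) := by linarith
  have hdeteq : (A T).det = ∏ i, hherm.eigenvalues i := by
    simpa using hherm.det_eq_prod_eigenvalues
  haveI : Nonempty (Fin d) := ⟨⟨0, hd⟩⟩
  have hdetT : (A T).det ≤ (η * (1 + T * S ^ 2 / (η * d))) ^ d := by
    have hAM := aux_amgm hherm.eigenvalues (fun i => ((hPD T).eigenvalues_pos i).le)
    rw [← aux_trace_eq hherm, Fintype.card_fin] at hAM
    have htrnn : 0 ≤ (A T).trace := by
      rw [aux_trace_eq hherm]
      exact Finset.sum_nonneg fun i _ => ((hPD T).eigenvalues_pos i).le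
    calc (A T).det = ∏ i, hherm.eigenvalues i := hdeteq
    _ ≤ ((A T).trace / d) ^ d := hAM
    _ ≤ ((η * d + T * S ^ 2) / d) ^ d := by
        apply pow_le_pow_left₀ (div_nonneg htrnn hdn.le)
        gcongr
    _ = (η * (1 + T * S ^ 2 / (η * d))) ^ d := by
        congr 1
        field_simp
  have hdet0 : (A 0).det = η ^ d := by
    rw [hA0, Matrix.det_smul, Matrix.det_one, Fintype.card_fin, mul_one]
  have hratio : (A T).det / (A 0).det ≤ (1 + T * S ^ 2 / (η * d)) ^ d := by
    rw [hdet0, div_le_iff₀ (by positivity)]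
    calc (A T).det ≤ (η * (1 + T * S ^ 2 / (η * d))) ^ d := hdetT
    _ = (1 + T * S ^ 2 / (η * d)) ^ d * η ^ d := by rw [mul_pow]; ring
  have hlog := Real.log_le_log (div_pos (hdpos T) (hdpos 0)) hratio
  rw [Real.log_pow] at hlog
  nlinarith
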